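/- arXiv:1310.2990 — 2 statements merged into one kernel-verified Lean document; each statement's English description precedes it below -/
import Mathlib

section
/- Let K be a Galois extension of ℚ of degree 3. Then the trace form q(x) = Tr_{K/ℚ}(x²) on K, viewed as a quadratic form over ℚ, is isometric to the diagonal form ⟨1,1,1⟩. -/
open NumberField

section Aux

variable {K : Type*} [Field K] [NumberField K] [IsGalois ℚ K]

set_option maxHeartbeats 1000000 in
theorem cubic_aux (h3 : Module.finrank ℚ K = 3) :
    ∃ (x y : K) (s a b : ℚ),
      s ≠ 0 ∧ s = 2*a^2 + 6*b^2 ∧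
      Algebra.trace ℚ K 1 = 3 ∧
      Algebra.trace ℚ K x = 0 ∧ Algebra.trace ℚ K y = 0 ∧
      Algebra.trace ℚ K (x*x) = s ∧ Algebra.trace ℚ K (y*y) = s ∧
      2 * Algebra.trace ℚ K (x*y) = -s := by
  classical
  set T := Algebra.trace ℚ K with hT
  set A := algebraMap ℚ K with hA
  have hAinj : Function.Injective A := (algebraMap ℚ K).injective
  have hcard : Fintype.card (K ≃ₐ[ℚ] K) = 3 := by
    rw [← Nat.card_eq_fintype_card, IsGalois.card_aut_eq_finrank, h3]
  obtain ⟨σ, hσ1⟩ := Fintype.exists_ne_of_one_lt_card (by omega) (1 : K ≃ₐ[ℚ] K)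
  have hdvd : orderOf σ ∣ 3 := hcard ▸ orderOf_dvd_card
  have hord : orderOf σ = 3 := by
    rcases (Nat.prime_three).eq_one_or_self_of_dvd _ hdvd with h | h
    · exact absurd (orderOf_eq_one_iff.mp h) hσ1
    · exact h
  have hσσ1 : σ * σ ≠ 1 := by
    intro h
    have h2 : orderOf σ ∣ 2 := orderOf_dvd_of_pow_eq_one (by rw [pow_two]; exact h)
    rw [hord] at h2
    omega
  have hσσσ : σ * σ ≠ σ := fun h => hσ1 (mul_right_cancel (b := σ) (by rw [h, one_mul]))
  have huniv : (Finset.univ : Finset (K ≃ₐ[ℚ] K)) = {1, σ, σ * σ} := by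
    symm
    apply Finset.eq_univ_of_card
    rw [hcard, Finset.card_insert_of_notMem (by simp [hσ1.symm, hσσ1.symm]),
      Finset.card_insert_of_notMem (by simp [hσσσ.symm]), Finset.card_singleton]
  have hsum : ∀ w : K, A (T w) = w + σ w + σ (σ w) := by
    intro w
    rw [hA, hT, trace_eq_sum_automorphisms, huniv]
    rw [Finset.sum_insert (by simp [hσ1.symm, hσσ1.symm]),
      Finset.sum_insert (by simp [hσσσ.symm]), Finset.sum_singleton]
    simp only [AlgEquiv.one_apply, AlgEquiv.mul_apply]
    ring
  obtain ⟨z, hz⟩ : ∃ z : K, z ∉ (⊥ : Subalgebra ℚ K) := by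
    by_contra h
    push_neg at h
    have hbt : (⊥ : Subalgebra ℚ K) = ⊤ := by ext w; simp [h w]
    have := Subalgebra.bot_eq_top_iff_finrank_eq_one.mp hbt
    rw [h3] at this; omega
  set x : K := z - A (T z / 3) with hxdef
  have hx0 : x ≠ 0 := by
    intro h
    apply hz
    rw [Algebra.mem_bot]
    have h' : z - A (T z / 3) = 0 := h
    exact ⟨T z / 3, by rw [← hA]; linear_combination -h'⟩
  have hTx : T x = 0 := by
    rw [hxdef, map_sub, hT, hA, Algebra.trace_algebraMap, h3]
    push_cast
    ring
  set y : K := σ x with hydef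
  have hz2 : σ (σ x) = -x - y := by
    have h := hsum x
    rw [hTx, map_zero] at h
    rw [← hydef] at h
    linear_combination -h
  have hσy : σ y = -x - y := hz2
  have hσ2y : σ (σ y) = x := by
    rw [hσy, map_sub, map_neg, hz2, ← hydef]
    ring
  have hT1 : T 1 = 3 := by
    have h1 : (1 : K) = A 1 := by simp
    rw [h1, hT, hA, Algebra.trace_algebraMap, h3]; norm_num
  set s : ℚ := T (x*x) with hs
  have hAs : A s = x*x + y*y + (-x-y)*(-x-y) := by
    rw [hs, hsum (x*x)]
    simp only [map_mul]
    rw [hz2, ← hydef]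
  have hTy : T y = 0 := by
    apply hAinj
    rw [hsum y, hσ2y, hσy, map_zero]
    ring
  have hTyy : T (y*y) = s := by
    apply hAinj
    rw [hsum (y*y)]
    simp only [map_mul]
    rw [hσ2y, hσy, hAs]
    ring
  have hAxy : A (T (x*y)) = x*y + y*(-x-y) + (-x-y)*x := by
    rw [hsum (x*y)]
    simp only [map_mul]
    rw [hσ2y, hz2, ← hydef]
  have hTxy : 2 * T (x*y) = -s := by
    apply hAinj
    rw [map_mul, map_neg, hAxy, hAs, map_ofNat]
    ring
  set N : ℚ := Algebra.norm ℚ x with hN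
  have hAN : A N = x * y * (-x - y) := by
    rw [hN, hA, Algebra.norm_eq_prod_automorphisms, huniv]
    rw [Finset.prod_insert (by simp [hσ1.symm, hσσ1.symm]),
      Finset.prod_insert (by simp [hσσσ.symm]), Finset.prod_singleton]
    simp only [AlgEquiv.one_apply, AlgEquiv.mul_apply]
    rw [hz2, ← hydef]
    ring
  set d : K := (x - y) * (x + 2*y) * (-(2*x) - y) with hd
  have hσd : σ d = d := by
    rw [hd]
    simp only [map_mul, map_sub, map_add, map_neg, map_ofNat]
    rw [← hydef, hσy]
    ring
  have hfix : ∀ τ : K ≃ₐ[ℚ] K, τ d = d := by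
    intro τ
    have hτ : τ = 1 ∨ τ = σ ∨ τ = σ * σ := by
      have h := Finset.mem_univ τ
      rw [huniv] at h
      simpa using h
    rcases hτ with h | h | h <;> subst h <;>
      simp [AlgEquiv.mul_apply, hσd]
  obtain ⟨dq, hdq⟩ : ∃ r : ℚ, A r = d := by
    have hmem : d ∈ IntermediateField.fixedField
        (IntermediateField.fixingSubgroup (⊥ : IntermediateField ℚ K)) := by
      intro g
      exact hfix g
    rw [IsGalois.fixedField_fixingSubgroup] at hmem
    exact IntermediateField.mem_bot.mp hmem
  have hkey : 2 * dq^2 = s^3 - 54 * N^2 := by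
    apply hAinj
    have h2 : A (2*dq^2) = 2 * d^2 := by rw [map_mul, map_pow, hdq, map_ofNat]
    rw [h2, map_sub, map_pow, map_mul, map_pow, hAN, hAs, map_ofNat, hd]
    ring
  have hN0 : N ≠ 0 := by
    rw [hN]
    exact Algebra.norm_ne_zero_iff.mpr hx0
  have hs0 : s ≠ 0 := by
    intro h
    rw [h] at hkey
    have hN2 : N^2 = 0 := by linarith [sq_nonneg dq, sq_nonneg N]
    exact hN0 (pow_eq_zero_iff (by norm_num) |>.mp hN2)
  refine ⟨x, y, s, dq/s, 3*N/s, hs0, ?_, hT1, hTx, hTy, hs.symm, hTyy, hTxy⟩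
  field_simp
  linear_combination -hkey

end Aux

set_option maxHeartbeats 1000000 in
/-- The trace form `x ↦ Tr_{K/ℚ}(x²)` of a Galois cubic field `K` is isometric over `ℚ`
to the diagonal form `⟨1,1,1⟩`. -/
theorem traceForm_of_galois_cubic (K : Type*) [Field K] [NumberField K] [IsGalois ℚ K]
    (h3 : Module.finrank ℚ K = 3) :
    QuadraticMap.Equivalent (Algebra.traceForm ℚ K).toQuadraticMap
      (QuadraticMap.weightedSumSquares ℚ (fun _ : Fin 3 => (1 : ℚ))) := by
  obtain ⟨x, y, s, a, b, hs0, hsab, hT1, hTx, hTy, hTxx, hTyy, hTxy⟩ := cubic_aux h3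
  subst hsab
  set A := algebraMap ℚ K with hA
  set T := Algebra.trace ℚ K with hT
  have hTxy' : T (x*y) = -(2*a^2+6*b^2)/2 := by linarith
  have hTyx : T (y*x) = -(2*a^2+6*b^2)/2 := by rw [mul_comm]; exact hTxy'
  have hTA : ∀ (r : ℚ) (w : K), T (A r * w) = r * T w := by
    intro r w
    rw [hA, ← Algebra.smul_def, map_smul, smul_eq_mul]
  set s : ℚ := 2*a^2+6*b^2 with hs
  have texp : ∀ c₁ c₂ c₃ c₄ c₅ c₆ : ℚ,
      T ((A c₁ + A c₂ * x + A c₃ * y) * (A c₄ + A c₅ * x + A c₆ * y)) =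
        3*(c₁*c₄) + s*(c₂*c₅) + s*(c₃*c₆) - s/2*(c₂*c₆ + c₃*c₅) := by
    intro c₁ c₂ c₃ c₄ c₅ c₆
    have hprod : (A c₁ + A c₂ * x + A c₃ * y) * (A c₄ + A c₅ * x + A c₆ * y) =
        A (c₁*c₄) * 1 + A (c₁*c₅) * x + A (c₂*c₄) * x + A (c₁*c₆) * y + A (c₃*c₄) * y
          + A (c₂*c₅) * (x*x) + A (c₃*c₆) * (y*y) + A (c₂*c₆) * (x*y)
          + A (c₃*c₅) * (y*x) := by
      simp only [map_add, map_mul]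
      ring
    rw [hprod]
    simp only [map_add, hTA]
    rw [hT1, hTx, hTy, hTxx, hTyy, hTxy', hTyx]
    ring
  have hs0' : s ≠ 0 := hs0
  set u1 : K := A (1/3) + A (4*a/(3*s)) * x + A (2*(a-3*b)/(3*s)) * y with hu1
  set u2 : K := A (1/3) + A (2*(3*b-a)/(3*s)) * x + A (2*(a+3*b)/(3*s)) * y with hu2
  set u3 : K := A (1/3) + A (2*(-a-3*b)/(3*s)) * x + A (-(4*a)/(3*s)) * y with hu3
  have h11 : T (u1 * u1) = 1 := by
    rw [hu1, texp]; rw [hs]; field_simp [show (2*a^2+6*b^2 : ℚ) ≠ 0 from hs0]; ring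
  have h22 : T (u2 * u2) = 1 := by
    rw [hu2, texp]; rw [hs]; field_simp [show (2*a^2+6*b^2 : ℚ) ≠ 0 from hs0]; ring
  have h33 : T (u3 * u3) = 1 := by
    rw [hu3, texp]; rw [hs]; field_simp [show (2*a^2+6*b^2 : ℚ) ≠ 0 from hs0]; ring
  have h12 : T (u1 * u2) = 0 := by
    rw [hu1, hu2, texp]; rw [hs]; field_simp [show (2*a^2+6*b^2 : ℚ) ≠ 0 from hs0]; ring
  have h13 : T (u1 * u3) = 0 := by
    rw [hu1, hu3, texp]; rw [hs]; field_simp [show (2*a^2+6*b^2 : ℚ) ≠ 0 from hs0]; ring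
  have h23 : T (u2 * u3) = 0 := by
    rw [hu2, hu3, texp]; rw [hs]; field_simp [show (2*a^2+6*b^2 : ℚ) ≠ 0 from hs0]; ring
  have h21 : T (u2 * u1) = 0 := by rw [mul_comm]; exact h12
  have h31 : T (u3 * u1) = 0 := by rw [mul_comm]; exact h13
  have h32 : T (u3 * u2) = 0 := by rw [mul_comm]; exact h23
  set g : (Fin 3 → ℚ) →ₗ[ℚ] K :=
    (LinearMap.proj 0).smulRight u1 + (LinearMap.proj 1).smulRight u2
      + (LinearMap.proj 2).smulRight u3 with hg
  have hgapp : ∀ c : Fin 3 → ℚ, g c = c 0 • u1 + c 1 • u2 + c 2 • u3 := by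
    intro c
    simp [hg]
  have hgT : ∀ c c' : Fin 3 → ℚ,
      T (g c * g c') = c 0 * c' 0 + c 1 * c' 1 + c 2 * c' 2 := by
    intro c c'
    rw [hgapp, hgapp]
    have hexp : (c 0 • u1 + c 1 • u2 + c 2 • u3) * (c' 0 • u1 + c' 1 • u2 + c' 2 • u3)
        = (c 0 * c' 0) • (u1*u1) + (c 0 * c' 1) • (u1*u2) + (c 0 * c' 2) • (u1*u3)
          + (c 1 * c' 0) • (u2*u1) + (c 1 * c' 1) • (u2*u2) + (c 1 * c' 2) • (u2*u3)
          + (c 2 * c' 0) • (u3*u1) + (c 2 * c' 1) • (u3*u2) + (c 2 * c' 2) • (u3*u3) := by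
      simp only [smul_eq_mul, Algebra.smul_def, map_mul]
      push_cast
      ring
    rw [hexp]
    simp only [map_add, map_smul, smul_eq_mul]
    rw [h11, h22, h33, h12, h13, h23, h21, h31, h32]
    ring
  have h0 : ∀ c : Fin 3 → ℚ, g c = 0 → c = 0 := by
    intro c hc
    funext i
    have h := hgT c (Pi.single i 1)
    rw [hc, zero_mul, map_zero] at h
    fin_cases i <;> simp [Pi.single_apply] at h <;> simpa using h.symm
  have hinj : Function.Injective g :=
    LinearMap.ker_eq_bot.mp (LinearMap.ker_eq_bot'.mpr h0)
  have hdim : Module.finrank ℚ (Fin 3 → ℚ) = Module.finrank ℚ K := by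
    simp [h3]
  set e := g.linearEquivOfInjective hinj hdim with he
  refine QuadraticMap.Equivalent.symm ⟨⟨e, ?_⟩⟩
  intro c
  show (Algebra.traceForm ℚ K).toQuadraticMap (e c) = _
  have hec : e c = g c := rfl
  rw [hec, LinearMap.BilinMap.toQuadraticMap_apply, Algebra.traceForm_apply, ← hT, hgT,
    QuadraticMap.weightedSumSquares_apply]
  simp [Fin.sum_univ_three]
end

section
/- Let p be a rational prime and K, L number fields of the same degree. The Euler factors at p of the Dedekind zeta functions of K and L agree (as functions of real s > 1) if and only if p has the same decomposition type in K and L. -/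
section EulerAux
open NumberField Polynomial
noncomputable def Qm (m : Multiset ℕ) : Polynomial ℝ :=
  (m.map (fun f => 1 - X ^ f)).prod

lemma Qm_zero : Qm 0 = 1 := by simp [Qm]

lemma Qm_cons (f : ℕ) (m : Multiset ℕ) : Qm (f ::ₘ m) = (1 - X ^ f) * Qm m := by
  simp [Qm]

lemma Qm_factor_ne_zero {f : ℕ} (hf : 1 ≤ f) : (1 - X ^ f : Polynomial ℝ) ≠ 0 := by
  have := Polynomial.X_pow_sub_C_ne_zero (R := ℝ) (Nat.lt_of_lt_of_le Nat.zero_lt_one hf) 1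
  intro h
  apply this
  have : (X ^ f - C 1 : Polynomial ℝ) = -(1 - X ^ f) := by simp [C_1]
  rw [this, h, neg_zero]

lemma Qm_ne_zero {m : Multiset ℕ} (hm : ∀ f ∈ m, 1 ≤ f) : Qm m ≠ 0 := by
  induction m using Multiset.induction_on with
  | empty => simp [Qm_zero]
  | cons f m ih =>
    rw [Qm_cons]
    exact mul_ne_zero (Qm_factor_ne_zero (hm f (Multiset.mem_cons_self f m)))
      (ih (fun g hg => hm g (Multiset.mem_cons_of_mem hg)))

lemma Qm_natDegree_factor {f : ℕ} (hf : 1 ≤ f) : (1 - X ^ f : Polynomial ℝ).natDegree = f := by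
  have : (1 - X ^ f : Polynomial ℝ) = -(X ^ f - C 1) := by simp [C_1]
  rw [this, natDegree_neg, natDegree_X_pow_sub_C]

lemma Qm_natDegree {m : Multiset ℕ} (hm : ∀ f ∈ m, 1 ≤ f) : (Qm m).natDegree = m.sum := by
  induction m using Multiset.induction_on with
  | empty => simp [Qm_zero]
  | cons f m ih =>
    have h1 := hm f (Multiset.mem_cons_self f m)
    have h2 : ∀ g ∈ m, 1 ≤ g := fun g hg => hm g (Multiset.mem_cons_of_mem hg)
    rw [Qm_cons, natDegree_mul (Qm_factor_ne_zero h1) (Qm_ne_zero h2),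
      Qm_natDegree_factor h1, ih h2, Multiset.sum_cons]

lemma Qm_coeff_zero {m : Multiset ℕ} (hm : ∀ f ∈ m, 1 ≤ f) : (Qm m).coeff 0 = 1 := by
  induction m using Multiset.induction_on with
  | empty => simp [Qm_zero]
  | cons f m ih =>
    have h1 := hm f (Multiset.mem_cons_self f m)
    rw [Qm_cons, Polynomial.mul_coeff_zero, ih (fun g hg => hm g (Multiset.mem_cons_of_mem hg))]
    simp [coeff_X_pow, Nat.ne_of_lt (Nat.lt_of_lt_of_le Nat.zero_lt_one h1)]

lemma Qm_coeff_min {m : Multiset ℕ} (c : ℕ) (hc : 1 ≤ c) (hm : ∀ f ∈ m, c ≤ f) :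
    (Qm m).coeff c = -(m.count c : ℝ) := by
  induction m using Multiset.induction_on with
  | empty => simp [Qm_zero, coeff_one, Nat.ne_of_gt hc]
  | cons f m ih =>
    have h1 : c ≤ f := hm f (Multiset.mem_cons_self f m)
    have h2 : ∀ g ∈ m, c ≤ g := fun g hg => hm g (Multiset.mem_cons_of_mem hg)
    have h2' : ∀ g ∈ m, 1 ≤ g := fun g hg => le_trans hc (h2 g hg)
    have expand : Qm (f ::ₘ m) = Qm m - Qm m * X ^ f := by rw [Qm_cons]; ring
    rw [expand, Polynomial.coeff_sub, Polynomial.coeff_mul_X_pow', ih h2]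
    rcases eq_or_lt_of_le h1 with heq | hlt
    · subst heq
      rw [if_pos le_rfl, Nat.sub_self, Qm_coeff_zero h2']
      rw [Multiset.count_cons_self]
      push_cast
      ring
    · rw [if_neg (by omega), Multiset.count_cons_of_ne (by omega)]
      ring

lemma Qm_inj : ∀ (n : ℕ) (m₁ m₂ : Multiset ℕ), m₁.card = n →
    (∀ f ∈ m₁, 1 ≤ f) → (∀ f ∈ m₂, 1 ≤ f) → Qm m₁ = Qm m₂ → m₁ = m₂ := by
  intro n
  induction n with
  | zero =>
    intro m₁ m₂ hcard h₁ h₂ hQ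
    have hm₁ : m₁ = 0 := Multiset.card_eq_zero.mp hcard
    subst hm₁
    rw [Qm_zero] at hQ
    have hdeg : m₂.sum = 0 := by
      rw [← Qm_natDegree h₂, ← hQ, natDegree_one]
    have hall : ∀ f ∈ m₂, f = 0 := Multiset.sum_eq_zero_iff.mp hdeg
    refine (Multiset.eq_zero_of_forall_notMem (fun f hf => ?_)).symm
    have := h₂ f hf
    have := hall f hf
    omega
  | succ n ih =>
    intro m₁ m₂ hcard h₁ h₂ hQ
    -- m₂ is nonempty
    have hm₁ne : m₁ ≠ 0 := by
      intro h; rw [h] at hcard; simp at hcard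
    have hm₂ne : m₂ ≠ 0 := by
      intro h
      subst h
      rw [Qm_zero] at hQ
      have hdeg : m₁.sum = 0 := by rw [← Qm_natDegree h₁, hQ, natDegree_one]
      obtain ⟨f, hf⟩ := Multiset.exists_mem_of_ne_zero hm₁ne
      have := Multiset.sum_eq_zero_iff.mp hdeg f hf
      have := h₁ f hf
      omega
    -- c = min of all elements
    set T : Set ℕ := {x | x ∈ m₁ ∨ x ∈ m₂} with hT
    have hTne : T.Nonempty := by
      obtain ⟨f, hf⟩ := Multiset.exists_mem_of_ne_zero hm₁ne
      exact ⟨f, Or.inl hf⟩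
    set c := sInf T with hcdef
    have hcT : c ∈ T := Nat.sInf_mem hTne
    have hc1 : 1 ≤ c := by rcases hcT with h | h; exacts [h₁ c h, h₂ c h]
    have hle₁ : ∀ f ∈ m₁, c ≤ f := fun f hf => Nat.sInf_le (Or.inl hf)
    have hle₂ : ∀ f ∈ m₂, c ≤ f := fun f hf => Nat.sInf_le (Or.inr hf)
    have hcount : m₁.count c = m₂.count c := by
      have := Qm_coeff_min c hc1 hle₁
      have h2 := Qm_coeff_min c hc1 hle₂
      rw [hQ, h2] at this
      symm at this
      exact_mod_cast neg_injective this
    have hcm₁ : c ∈ m₁ ∧ c ∈ m₂ := by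
      rcases hcT with h | h
      · exact ⟨h, Multiset.count_pos.mp (by rw [← hcount]; exact Multiset.count_pos.mpr h)⟩
      · exact ⟨Multiset.count_pos.mp (by rw [hcount]; exact Multiset.count_pos.mpr h), h⟩
    obtain ⟨hc₁, hc₂⟩ := hcm₁
    have e₁ : c ::ₘ m₁.erase c = m₁ := Multiset.cons_erase hc₁
    have e₂ : c ::ₘ m₂.erase c = m₂ := Multiset.cons_erase hc₂
    have hQ' : Qm (m₁.erase c) = Qm (m₂.erase c) := by
      have : (1 - X ^ c : Polynomial ℝ) * Qm (m₁.erase c)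
          = (1 - X ^ c) * Qm (m₂.erase c) := by
        rw [← Qm_cons, ← Qm_cons, e₁, e₂, hQ]
      exact mul_left_cancel₀ (Qm_factor_ne_zero hc1) this
    have herase : m₁.erase c = m₂.erase c := by
      apply ih
      · have := congrArg Multiset.card e₁
        rw [Multiset.card_cons] at this
        omega
      · exact fun f hf => h₁ f (Multiset.mem_of_mem_erase hf)
      · exact fun f hf => h₂ f (Multiset.mem_of_mem_erase hf)
      · exact hQ'
    rw [← e₁, ← e₂, herase]


set_option maxHeartbeats 1000000 in
set_option synthInstance.maxHeartbeats 1000000 in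
lemma absNorm_eq_pow (K : Type*) [Field K] [NumberField K]
    (p : ℕ) (hp : p.Prime) (P : Ideal (𝓞 K)) (hPm : P.IsMaximal) (hpP : (p : 𝓞 K) ∈ P) :
    Ideal.absNorm P = p ^ Ideal.inertiaDeg' (Ideal.span {(p : ℤ)}) P := by
  have hpmax : (Ideal.span {(p : ℤ)}).IsMaximal :=
    PrincipalIdealRing.isMaximal_of_irreducible (Nat.prime_iff_prime_int.mp hp).irreducible
  have hcomap : Ideal.comap (algebraMap ℤ (𝓞 K)) P = Ideal.span {(p : ℤ)} := by
    have hle : Ideal.span {(p : ℤ)} ≤ Ideal.comap (algebraMap ℤ (𝓞 K)) P := by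
      rw [Ideal.span_le, Set.singleton_subset_iff]
      simpa using hpP
    have hne : Ideal.comap (algebraMap ℤ (𝓞 K)) P ≠ ⊤ := by
      haveI := hPm
      exact Ideal.comap_ne_top _ hPm.ne_top
    exact (hpmax.eq_of_le hne hle).symm
  haveI : P.LiesOver (Ideal.span {(p : ℤ)}) := ⟨hcomap.symm⟩
  haveI := hpmax
  rw [Ideal.inertiaDeg'_algebraMap]
  haveI : NeZero p := ⟨hp.ne_zero⟩
  haveI : Finite (ℤ ⧸ Ideal.span {(p : ℤ)}) :=
    Finite.of_equiv (ZMod p) (Int.quotientSpanNatEquivZMod p).toEquiv.symm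
  haveI : Module.Finite ℤ (𝓞 K ⧸ P) := Module.Finite.quotient ℤ P
  letI M : Module (ℤ ⧸ Ideal.span {(p : ℤ)}) (𝓞 K ⧸ P) := inferInstance
  haveI : Module.Finite (ℤ ⧸ Ideal.span {(p : ℤ)}) (𝓞 K ⧸ P) :=
    Module.Finite.of_restrictScalars_finite ℤ _ _
  haveI : Finite (𝓞 K ⧸ P) := Module.finite_of_finite (ℤ ⧸ Ideal.span {(p : ℤ)})
  haveI : Fintype (𝓞 K ⧸ P) := Fintype.ofFinite _
  haveI : Fintype (ℤ ⧸ Ideal.span {(p : ℤ)}) := Fintype.ofFinite _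
  have hcard := @Module.card_eq_pow_finrank (ℤ ⧸ Ideal.span {(p : ℤ)}) (𝓞 K ⧸ P)
    (Ideal.Quotient.field _).toDivisionRing _ M _ _
  rw [Ideal.absNorm_apply, Submodule.cardQuot_apply, Nat.card_eq_fintype_card, hcard]
  have hc : Fintype.card (ℤ ⧸ Ideal.span {(p : ℤ)}) = p := by
    rw [← Nat.card_eq_fintype_card, Nat.card_congr (Int.quotientSpanNatEquivZMod p).toEquiv,
      Nat.card_zmod]
  rw [hc]


lemma comap_eq_span (K : Type*) [Field K] [NumberField K]
    (p : ℕ) (hp : p.Prime) (P : Ideal (𝓞 K)) (hPm : P.IsMaximal) (hpP : (p : 𝓞 K) ∈ P) :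
    Ideal.comap (algebraMap ℤ (𝓞 K)) P = Ideal.span {(p : ℤ)} := by
  have hpmax : (Ideal.span {(p : ℤ)}).IsMaximal :=
    PrincipalIdealRing.isMaximal_of_irreducible (Nat.prime_iff_prime_int.mp hp).irreducible
  have hle : Ideal.span {(p : ℤ)} ≤ Ideal.comap (algebraMap ℤ (𝓞 K)) P := by
    rw [Ideal.span_le, Set.singleton_subset_iff]
    simpa using hpP
  exact (hpmax.eq_of_le (Ideal.comap_ne_top _ hPm.ne_top) hle).symm

lemma inertiaDeg_pos' (K : Type*) [Field K] [NumberField K]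
    (p : ℕ) (hp : p.Prime) (P : Ideal (𝓞 K)) (hPm : P.IsMaximal) (hpP : (p : 𝓞 K) ∈ P) :
    0 < Ideal.inertiaDeg' (Ideal.span {(p : ℤ)}) P := by
  haveI hpmax : (Ideal.span {(p : ℤ)}).IsMaximal :=
    PrincipalIdealRing.isMaximal_of_irreducible (Nat.prime_iff_prime_int.mp hp).irreducible
  haveI : P.LiesOver (Ideal.span {(p : ℤ)}) := ⟨(comap_eq_span K p hp P hPm hpP).symm⟩
  exact Ideal.inertiaDeg'_pos (Ideal.span {(p : ℤ)}) P

lemma pow_neg_rpow (p f : ℕ) (s : ℝ) :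
    ((p ^ f : ℕ) : ℝ) ^ (-s) = ((p : ℝ) ^ (-s)) ^ f := by
  have hp0 : (0 : ℝ) ≤ p := Nat.cast_nonneg p
  rw [Nat.cast_pow, ← Real.rpow_natCast (p : ℝ) f, ← Real.rpow_natCast ((p:ℝ) ^ (-s)) f,
    ← Real.rpow_mul hp0, ← Real.rpow_mul hp0, mul_comm]

lemma Qm_eval (m : Multiset ℕ) (x : ℝ) :
    (Qm m).eval x = (m.map (fun f => 1 - x ^ f)).prod := by
  rw [Qm, Polynomial.eval_multiset_prod, Multiset.map_map]
  congr 1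
  ext f
  simp

lemma euler_prod_eq (K : Type*) [Field K] [NumberField K]
    (p : ℕ) (hp : p.Prime)
    (hK : {P : Ideal (𝓞 K) | P.IsMaximal ∧ (p : 𝓞 K) ∈ P}.Finite) (s : ℝ) :
    ∏ P ∈ hK.toFinset, (1 - (Ideal.absNorm P : ℝ) ^ (-s))⁻¹
      = ((hK.toFinset.val.map
          (fun P => Ideal.inertiaDeg' (Ideal.span {(p : ℤ)}) P)).map
          (fun d => (1 - ((p : ℝ) ^ (-s)) ^ d)⁻¹)).prod := by
  rw [Finset.prod_eq_multiset_prod, Multiset.map_map]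
  apply congrArg
  apply Multiset.map_congr rfl
  intro P hP
  have hPmem : P.IsMaximal ∧ (p : 𝓞 K) ∈ P := by
    have := Set.Finite.mem_toFinset hK (a := P)
    rw [← Finset.mem_val] at this
    exact this.mp hP
  simp only [Function.comp_apply]
  rw [absNorm_eq_pow K p hp P hPmem.1 hPmem.2, pow_neg_rpow]



end EulerAux



open NumberField

/-- For number fields `K`, `L` of the same degree and a rational prime `p`, the Euler
factors at `p` of their Dedekind zeta functions agree for all real `s > 1` iff `p` has the
same decomposition type (multiset of residue degrees of primes above `p`) in `K` and `L`. -/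
theorem eulerFactor_eq_iff_decompositionType_eq
    (K L : Type*) [Field K] [NumberField K] [Field L] [NumberField L]
    (hdeg : Module.finrank ℚ K = Module.finrank ℚ L)
    (p : ℕ) (hp : p.Prime)
    (hK : {P : Ideal (𝓞 K) | P.IsMaximal ∧ (p : 𝓞 K) ∈ P}.Finite)
    (hL : {Q : Ideal (𝓞 L) | Q.IsMaximal ∧ (p : 𝓞 L) ∈ Q}.Finite) :
    (∀ s : ℝ, 1 < s →
        ∏ P ∈ hK.toFinset, (1 - (Ideal.absNorm P : ℝ) ^ (-s))⁻¹
          = ∏ Q ∈ hL.toFinset, (1 - (Ideal.absNorm Q : ℝ) ^ (-s))⁻¹)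
      ↔ hK.toFinset.val.map
            (fun P => Ideal.inertiaDeg' (Ideal.span {(p : ℤ)}) P)
          = hL.toFinset.val.map
            (fun Q => Ideal.inertiaDeg' (Ideal.span {(p : ℤ)}) Q) := by
  set m₁ := hK.toFinset.val.map
      (fun P => Ideal.inertiaDeg' (Ideal.span {(p : ℤ)}) P) with hm₁
  set m₂ := hL.toFinset.val.map
      (fun Q => Ideal.inertiaDeg' (Ideal.span {(p : ℤ)}) Q) with hm₂
  have h₁ : ∀ f ∈ m₁, 1 ≤ f := by
    intro f hf
    rw [hm₁] at hf
    obtain ⟨P, hP, rfl⟩ := Multiset.mem_map.mp hf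
    rw [Finset.mem_val, Set.Finite.mem_toFinset] at hP
    exact inertiaDeg_pos' K p hp P hP.1 hP.2
  have h₂ : ∀ f ∈ m₂, 1 ≤ f := by
    intro f hf
    rw [hm₂] at hf
    obtain ⟨Q, hQ, rfl⟩ := Multiset.mem_map.mp hf
    rw [Finset.mem_val, Set.Finite.mem_toFinset] at hQ
    exact inertiaDeg_pos' L p hp Q hQ.1 hQ.2
  have hb : 1 < (p : ℝ) := by exact_mod_cast hp.one_lt
  constructor
  · intro h
    apply Qm_inj m₁.card m₁ m₂ rfl h₁ h₂
    apply Polynomial.eq_of_infinite_eval_eq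
    have hanti : StrictAnti (fun s : ℝ => (p : ℝ) ^ (-s)) := fun a b hab =>
      (Real.rpow_lt_rpow_left_iff hb).mpr (neg_lt_neg hab)
    have himg : ((fun s : ℝ => (p : ℝ) ^ (-s)) '' Set.Ioi 1).Infinite :=
      Set.Infinite.image (Set.injOn_of_injective hanti.injective)
        (Set.Ioi_infinite 1)
    apply Set.Infinite.mono _ himg
    rintro x ⟨s, hs, rfl⟩
    have hkey := h s hs
    rw [euler_prod_eq K p hp hK s, euler_prod_eq L p hp hL s, ← hm₁, ← hm₂] at hkey
    have hx : (Multiset.map (fun d => 1 - ((p:ℝ) ^ (-s)) ^ d) m₁).prod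
        = (Multiset.map (fun d => 1 - ((p:ℝ) ^ (-s)) ^ d) m₂).prod := by
      apply inv_injective
      rw [← Multiset.prod_map_inv, ← Multiset.prod_map_inv]
      exact hkey
    show Polynomial.eval ((p:ℝ) ^ (-s)) (Qm m₁) = Polynomial.eval ((p:ℝ) ^ (-s)) (Qm m₂)
    rw [Qm_eval, Qm_eval]
    exact hx
  · intro h s _
    rw [euler_prod_eq K p hp hK s, euler_prod_eq L p hp hL s, ← hm₁, ← hm₂, h]
end
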